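/- arXiv:1203.6056 — 3 statements merged into one kernel-verified Lean document; each statement's English description precedes it below -/
import Mathlib

section
/- In any G⁰-algebra, (x ≻ z) ∨ (y ≻ z) ≤ (x ∧ y) ≻ z. -/
class GAlgebra (A : Type*) where
  succ : A → A → A
  one : A
  g1 : ∀ x, succ one x = x
  g2 : ∀ x, succ x one = one
  g3 : ∀ x y, succ (succ x y) y = succ (succ y x) x
  g4 : ∀ x y z, succ x (succ y z) = one → succ y (succ x z) = one

open GAlgebra

local infixr:70 " ≻ " => GAlgebra.succ

class G0Algebra (A : Type*) extends GAlgebra A where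
  zero : A
  g17 : ∀ x, succ zero x = one

open G0Algebra

section aux
variable {A : Type*} [GAlgebra A]

lemma gRefl (x : A) : x ≻ x = (one : A) := by
  have h := g3 x (one : A)
  rw [g2, g1] at h
  exact h.symm

lemma gUb (a b : A) : a ≻ ((a ≻ b) ≻ b) = (one : A) := by
  apply g4
  rw [gRefl]

lemma gUb2 (a b : A) : b ≻ ((a ≻ b) ≻ b) = (one : A) := by
  apply g4
  rw [gRefl, g2]

lemma gTrans {a b c : A} (ha : a ≻ b = (one : A)) (hb : b ≻ c = (one : A)) :
    a ≻ c = (one : A) := by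
  have hc : c = (c ≻ b) ≻ b := by
    have h := g3 b c
    rw [hb, g1] at h
    exact h
  rw [hc]
  apply g4
  rw [ha, g2]

lemma gAntitone {a b : A} (c : A) (ha : a ≻ b = (one : A)) :
    (b ≻ c) ≻ (a ≻ c) = (one : A) := by
  apply g4
  exact gTrans ha (gUb b c)

lemma gLub {a b c : A} (ha : a ≻ c = (one : A)) (hb : b ≻ c = (one : A)) :
    ((a ≻ b) ≻ b) ≻ c = (one : A) := by
  have hc : c = (c ≻ b) ≻ b := by
    have h := g3 b c
    rw [hb, g1] at h
    exact h
  have h1 : (c ≻ b) ≻ (a ≻ b) = (one : A) := gAntitone b ha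
  have h2 : ((a ≻ b) ≻ b) ≻ ((c ≻ b) ≻ b) = (one : A) := gAntitone b h1
  rw [hc]
  exact h2

end aux

theorem stmt13 {A : Type*} [G0Algebra A] (x y z : A)
    (neg : A → A) (hneg : ∀ a : A, neg a = a ≻ (zero : A))
    (sup : A → A → A) (hsup : ∀ a b : A, sup a b = (a ≻ b) ≻ b)
    (inf : A → A → A) (hinf : ∀ a b : A, inf a b = neg (sup (neg a) (neg b))) :
    (sup (x ≻ z) (y ≻ z)) ≻ ((inf x y) ≻ z) = (one : A) := by
  simp only [hinf, hsup, hneg]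
  set m : A := (((x ≻ (zero : A)) ≻ y ≻ (zero : A)) ≻ y ≻ (zero : A)) ≻ (zero : A) with hm
  -- m ≤ ∼∼x and m ≤ ∼∼y
  have hmx : m ≻ ((x ≻ (zero : A)) ≻ (zero : A)) = (one : A) := by
    rw [hm]
    exact gAntitone (zero : A) (gUb (x ≻ (zero : A)) (y ≻ (zero : A)))
  have hmy : m ≻ ((y ≻ (zero : A)) ≻ (zero : A)) = (one : A) := by
    rw [hm]
    exact gAntitone (zero : A) (gUb2 (x ≻ (zero : A)) (y ≻ (zero : A)))
  -- ∼∼x ≤ x ∨ z and ∼∼y ≤ y ∨ z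
  have hxz : ((x ≻ (zero : A)) ≻ (zero : A)) ≻ ((x ≻ z) ≻ z) = (one : A) :=
    gLub (gUb x z) (g17 _)
  have hyz : ((y ≻ (zero : A)) ≻ (zero : A)) ≻ ((y ≻ z) ≻ z) = (one : A) :=
    gLub (gUb y z) (g17 _)
  -- x ≻ z ≤ m ≻ z and y ≻ z ≤ m ≻ z
  have h1 : (x ≻ z) ≻ (m ≻ z) = (one : A) := g4 _ _ _ (gTrans hmx hxz)
  have h2 : (y ≻ z) ≻ (m ≻ z) = (one : A) := g4 _ _ _ (gTrans hmy hyz)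
  exact gLub h1 h2
end

section
/- Every distributive G⁰-algebra is a De Morgan algebra (a distributive lattice with an involutive order-reversing negation) under the operations x ∨ y = (x ≻ y) ≻ y, x ∧ y = ∼(∼x ∨ ∼y), and ∼x = x ≻ 0, with greatest element 1. -/
open GAlgebra

local infixr:70 " ≻ " => GAlgebra.succ

open G0Algebra

section Aux

variable {A : Type*} [GAlgebra A]

lemma grefl (x : A) : x ≻ x = one := by
  have h := g3 x (one : A)
  simp only [g1, g2] at h
  exact h.symm

lemma gantisymm {x y : A} (h1 : x ≻ y = one) (h2 : y ≻ x = one) : x = y := by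
  have h := g3 x y
  rw [h1, h2, g1, g1] at h
  exact h.symm

lemma gtrans {x y z : A} (h1 : x ≻ y = one) (h2 : y ≻ z = one) : x ≻ z = one := by
  have hz : (z ≻ y) ≻ y = z := by rw [g3, h2, g1]
  have h4 := g4 (z ≻ y) x y (by rw [h1, g2])
  rwa [hz] at h4

lemma gle_sup_r (x y : A) : y ≻ ((x ≻ y) ≻ y) = one :=
  g4 (x ≻ y) y y (by rw [grefl, g2])

lemma gle_sup_l (x y : A) : x ≻ ((x ≻ y) ≻ y) = one := by
  rw [g3]; exact gle_sup_r y x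

lemma gantit {x y : A} (h : x ≻ y = one) (c : A) : (y ≻ c) ≻ (x ≻ c) = one :=
  g4 x (y ≻ c) c (gtrans h (gle_sup_l y c))

lemma glub {x y c : A} (h1 : x ≻ c = one) (h2 : y ≻ c = one) :
    ((x ≻ y) ≻ y) ≻ c = one := by
  have a1 : (c ≻ y) ≻ (x ≻ y) = one := by
    have := gantit h1 y
    exact this
  have a2 := gantit a1 y
  have a3 : (c ≻ y) ≻ y = c := by rw [g3, h2, g1]
  rwa [a3] at a2

end Aux

lemma gnneg {A : Type*} [G0Algebra A] (x : A) : (x ≻ (zero : A)) ≻ (zero : A) = x := by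
  rw [g3, g17, g1]

theorem stmt15 {A : Type*} [G0Algebra A]
    (neg : A → A) (hneg : ∀ a : A, neg a = a ≻ (zero : A))
    (sup : A → A → A) (hsup : ∀ a b : A, sup a b = (a ≻ b) ≻ b)
    (inf : A → A → A) (hinf : ∀ a b : A, inf a b = neg (sup (neg a) (neg b)))
    (hdist : ∀ a b c : A, ((inf a b) ≻ c) ≻ (sup (a ≻ c) (b ≻ c)) = (one : A)) :
    (∀ x y : A, sup x y = sup y x) ∧
    (∀ x y z : A, sup (sup x y) z = sup x (sup y z)) ∧
    (∀ x y : A, inf x y = inf y x) ∧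
    (∀ x y z : A, inf (inf x y) z = inf x (inf y z)) ∧
    (∀ x y : A, inf x (sup x y) = x) ∧
    (∀ x y : A, sup x (inf x y) = x) ∧
    (∀ x y z : A, inf x (sup y z) = sup (inf x y) (inf x z)) ∧
    (∀ x : A, neg (neg x) = x) ∧
    (∀ x y : A, neg (sup x y) = inf (neg x) (neg y)) ∧
    (∀ x : A, sup x (one : A) = (one : A)) := by
  -- basic facts transported to sup / inf / neg
  have hne : ∀ x : A, neg (neg x) = x := fun x => by rw [hneg, hneg, gnneg]
  have hsc : ∀ x y : A, sup x y = sup y x := fun x y => by rw [hsup, hsup, g3]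
  have hlsl : ∀ x y : A, x ≻ sup x y = one := fun x y => by
    rw [hsup]; exact gle_sup_l x y
  have hlsr : ∀ x y : A, y ≻ sup x y = one := fun x y => by
    rw [hsup]; exact gle_sup_r x y
  have hlub : ∀ {x y c : A}, x ≻ c = one → y ≻ c = one → sup x y ≻ c = one :=
    fun h1 h2 => by rw [hsup]; exact glub h1 h2
  have hnat : ∀ {x y : A}, x ≻ y = one → neg y ≻ neg x = one := fun h => by
    rw [hneg, hneg]; exact gantit h zero
  have hil : ∀ x y : A, inf x y ≻ x = one := fun x y => by
    have h := hnat (hlsl (neg x) (neg y))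
    rw [hne] at h; rw [hinf]; exact h
  have hir : ∀ x y : A, inf x y ≻ y = one := fun x y => by
    have h := hnat (hlsr (neg x) (neg y))
    rw [hne] at h; rw [hinf]; exact h
  have hli : ∀ {c x y : A}, c ≻ x = one → c ≻ y = one → c ≻ inf x y = one :=
    fun {c x y} h1 h2 => by
      have h := hnat (hlub (hnat h1) (hnat h2))
      rw [hne] at h; rw [hinf]; exact h
  -- sup associativity
  have hsa : ∀ x y z : A, sup (sup x y) z = sup x (sup y z) := by
    intro x y z
    apply gantisymm
    · exact hlub (hlub (hlsl x (sup y z))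
        (gtrans (hlsl y z) (hlsr x (sup y z)))) (gtrans (hlsr y z) (hlsr x (sup y z)))
    · exact hlub (gtrans (hlsl x y) (hlsl (sup x y) z))
        (hlub (gtrans (hlsr x y) (hlsl (sup x y) z)) (hlsr (sup x y) z))
  -- De Morgan laws as rewriting rules
  have hdm : ∀ x y : A, neg (sup x y) = inf (neg x) (neg y) := fun x y => by
    rw [hinf, hne, hne]
  have hni : ∀ x y : A, neg (inf x y) = sup (neg x) (neg y) := fun x y => by
    rw [hinf, hne]
  -- the two key implication identities
  have hD : ∀ a b c : A, inf a b ≻ c = sup (a ≻ c) (b ≻ c) := fun a b c =>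
    gantisymm (hdist a b c) (hlub (gantit (hil a b) c) (gantit (hir a b) c))
  have hW : ∀ a b c : A, sup a b ≻ c = inf (a ≻ c) (b ≻ c) := fun a b c => by
    apply gantisymm
    · exact hli (gantit (hlsl a b) c) (gantit (hlsr a b) c)
    · rw [hsup]
      refine g4 ((a ≻ b) ≻ b) (inf (a ≻ c) (b ≻ c)) c ?_
      have ha : a ≻ (inf (a ≻ c) (b ≻ c) ≻ c) = one :=
        g4 (inf (a ≻ c) (b ≻ c)) a c (hil (a ≻ c) (b ≻ c))
      have hb : b ≻ (inf (a ≻ c) (b ≻ c) ≻ c) = one :=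
        g4 (inf (a ≻ c) (b ≻ c)) b c (hir (a ≻ c) (b ≻ c))
      exact glub ha hb
  have hinfone : ∀ t : A, inf one t = t := fun t =>
    gantisymm (hir one t) (hli (g2 t) (grefl t))
  -- dual distributivity
  have hdd : ∀ a b c : A, sup a (inf b c) = inf (sup a b) (sup a c) := by
    intro a b c
    apply gantisymm
    · exact hli (hlub (hlsl a b) (gtrans (hil b c) (hlsr a b)))
        (hlub (hlsl a c) (gtrans (hir b c) (hlsr a c)))
    · set r := sup a (inf b c) with hr
      have e1 : sup a b ≻ r = b ≻ r := by
        rw [hW, hlsl a (inf b c), hinfone]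
      have e2 : sup a c ≻ r = c ≻ r := by
        rw [hW, hlsl a (inf b c), hinfone]
      have e3 : inf b c ≻ r = one := hlsr a (inf b c)
      have e4 : inf (sup a b) (sup a c) ≻ r = sup (sup a b ≻ r) (sup a c ≻ r) :=
        hD _ _ _
      rw [e1, e2, ← hD, e3] at e4
      exact e4
  -- distributivity via negation
  have hmain : ∀ x y z : A, inf x (sup y z) = sup (inf x y) (inf x z) := by
    intro x y z
    have key : neg (sup (neg x) (inf (neg y) (neg z))) =
        neg (inf (sup (neg x) (neg y)) (sup (neg x) (neg z))) := by
      rw [hdd]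
    simp only [hdm, hni, hne] at key
    exact key
  refine ⟨hsc, hsa, ?_, ?_, ?_, ?_, hmain, hne, hdm, ?_⟩
  · intro x y; rw [hinf, hinf, hsc]
  · intro x y z
    rw [hinf (inf x y) z, hni x y, hsa, ← hni y z, ← hinf]
  · intro x y
    exact gantisymm (hil x (sup x y)) (hli (grefl x) (hlsl x y))
  · intro x y
    exact gantisymm (hlub (grefl x) (hil x y)) (hlsl x (inf x y))
  · intro x; rw [hsup, g2]
end

section
/- In any G-algebra, the following conditions are equivalent: (i) ((x ≻ (x ≻ y)) ≻ x) ≻ x = 1; (ii) (x ≻ (x ≻ y)) ∨ x = 1; (iii) (x ≻ (x ≻ y)) ≻ x = x, where x ∨ y = (x ≻ y) ≻ y. -/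
open GAlgebra

local infixr:70 " ≻ " => GAlgebra.succ

lemma g_refl {A : Type*} [GAlgebra A] (x : A) : x ≻ x = one := by
  have h := g3 x (one : A)
  rw [g2, g1] at h
  exact h.symm

lemma g_antisym {A : Type*} [GAlgebra A] {a b : A} (h1 : a ≻ b = one)
    (h2 : b ≻ a = one) : a = b := by
  have h := g3 a b
  rw [h1, h2, g1, g1] at h
  exact h.symm

lemma g_le_succ {A : Type*} [GAlgebra A] (a x : A) : x ≻ (a ≻ x) = one := by
  apply g4
  rw [g_refl, g2]

theorem stmt16 {A : Type*} [GAlgebra A] (x y : A)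
    (sup : A → A → A) (hsup : ∀ a b : A, sup a b = (a ≻ b) ≻ b) :
    ((((x ≻ (x ≻ y)) ≻ x) ≻ x = (one : A)) ↔ (sup (x ≻ (x ≻ y)) x = (one : A))) ∧
    ((sup (x ≻ (x ≻ y)) x = (one : A)) ↔ ((x ≻ (x ≻ y)) ≻ x = x)) := by
  rw [hsup]
  refine ⟨Iff.rfl, ⟨fun h => g_antisym h (g_le_succ _ _), fun h => ?_⟩⟩
  rw [h, g_refl]
end
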